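/- Let p ≥ 2 and let T be a spider with p legs, each of length at least 2, and let β(T) = min{ ν(T − e) : e an edge of T }. Then for every n with n ≥ the number of vertices of T, ar(K_n, T) ≥ (β(T) − 1)·n − C(β(T), 2) + r, where r = 2 if exactly one leg of T has even length and r = 1 otherwise, and C(m,2) denotes the binomial coefficient m choose 2. -/

import Mathlib

open SimpleGraph Finset

/-- Number of colors used by an edge-coloring of the complete graph on `Fin n`. -/
noncomputable def colorCount {n : ℕ} (c : Sym2 (Fin n) → ℕ) : ℕ :=
  (c '' (⊤ : SimpleGraph (Fin n)).edgeSet).ncard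

/-- The coloring `c` of `K_n` admits a rainbow copy of the graph `G`. -/
def HasRainbowCopy {α : Type*} {n : ℕ} (c : Sym2 (Fin n) → ℕ) (G : SimpleGraph α) : Prop :=
  ∃ f : α → Fin n, Function.Injective f ∧
    ∀ e₁ ∈ G.edgeSet, ∀ e₂ ∈ G.edgeSet, e₁ ≠ e₂ → c (Sym2.map f e₁) ≠ c (Sym2.map f e₂)

/-- The anti-Ramsey number `ar(K_n, G)`: the maximum number of colors in an edge-coloring
of `K_n` with no rainbow copy of `G`. -/
noncomputable def antiRamsey (n : ℕ) {α : Type*} (G : SimpleGraph α) : ℕ :=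
  sSup {m | ∃ c : Sym2 (Fin n) → ℕ, ¬ HasRainbowCopy c G ∧ colorCount c = m}

/-- The spider with `p` legs of lengths `l 0, …, l (p-1)`: `none` is the center, and the
`i`-th leg is the path `center - (i,0) - (i,1) - ⋯ - (i, l i - 1)` (with `l i` edges). -/
def spider (p : ℕ) (l : Fin p → ℕ) : SimpleGraph (Option (Σ i : Fin p, Fin (l i))) where
  Adj u v :=
    (∃ a, u = none ∧ v = some a ∧ a.2.val = 0) ∨
    (∃ a, v = none ∧ u = some a ∧ a.2.val = 0) ∨
    (∃ a b, u = some a ∧ v = some b ∧ a.1 = b.1 ∧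
      (a.2.val + 1 = b.2.val ∨ b.2.val + 1 = a.2.val))
  symm := by
    constructor
    rintro u v h
    rcases h with ⟨a, h1, h2, h3⟩ | ⟨a, h1, h2, h3⟩ | ⟨a, b, h1, h2, h3, h4⟩
    · exact Or.inr (Or.inl ⟨a, h1, h2, h3⟩)
    · exact Or.inl ⟨a, h1, h2, h3⟩
    · exact Or.inr (Or.inr ⟨b, a, h2, h1, h3.symm, h4.symm⟩)
  loopless := by
    constructor
    rintro u h
    rcases h with ⟨a, h1, h2, h3⟩ | ⟨a, h1, h2, h3⟩ | ⟨a, b, h1, h2, h3, h4⟩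
    · rw [h1] at h2; cases h2
    · rw [h2] at h1; cases h1
    · rw [h1] at h2; injection h2 with h; subst h; omega

/-- `s` is a matching in `G`: a set of edges of `G` which pairwise share no vertex. -/
def IsMatchingIn {V : Type*} (G : SimpleGraph V) (s : Finset (Sym2 V)) : Prop :=
  (∀ e ∈ s, e ∈ G.edgeSet) ∧
  ∀ e₁ ∈ s, ∀ e₂ ∈ s, e₁ ≠ e₂ → ∀ v, v ∈ e₁ → v ∉ e₂

/-- The matching number `ν(G)`: the maximum size of a matching in `G`. -/
noncomputable def matchingNumber {V : Type*} (G : SimpleGraph V) : ℕ :=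
  sSup {m | ∃ s : Finset (Sym2 V), IsMatchingIn G s ∧ s.card = m}

----------------------------------------------------------------
-- auxiliary development
----------------------------------------------------------------

namespace SpiderAux

variable {p : ℕ} {l : Fin p → ℕ}

/-- vertex `t` on leg `k` (valid when `t < l k`) -/
def vtx (hl : ∀ i, 0 < l i) (k : Fin p) (t : ℕ) : Option (Σ i : Fin p, Fin (l i)) :=
  some ⟨k, ⟨t % l k, Nat.mod_lt _ (hl k)⟩⟩

lemma vtx_ne_none (hl : ∀ i, 0 < l i) (k : Fin p) (t : ℕ) : vtx hl k t ≠ none := by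
  simp [vtx]

lemma vtx_inj (hl : ∀ i, 0 < l i) {k k' : Fin p} {t t' : ℕ}
    (ht : t < l k) (ht' : t' < l k') (h : vtx hl k t = vtx hl k' t') : k = k' ∧ t = t' := by
  simp only [vtx, Option.some.injEq] at h
  obtain ⟨h1, h2⟩ := Sigma.mk.inj_iff.1 h
  subst h1
  refine ⟨rfl, ?_⟩
  have := Fin.val_eq_val _ _ |>.2 (heq_eq_eq _ _ ▸ h2 : _)
  simpa [Nat.mod_eq_of_lt ht, Nat.mod_eq_of_lt ht'] using this

/-- the edge of the spider at position `q` on leg `k`: `q = 0` is the center edge,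
`q ≥ 1` is the edge between vertices `q-1` and `q`. Valid when `q < l k`. -/
def edgeAt (hl : ∀ i, 0 < l i) (k : Fin p) (q : ℕ) :
    Sym2 (Option (Σ i : Fin p, Fin (l i))) :=
  if q = 0 then s(none, vtx hl k 0) else s(vtx hl k (q-1), vtx hl k q)

lemma edgeAt_mem (hl : ∀ i, 0 < l i) {k : Fin p} {q : ℕ} (hq : q < l k) :
    edgeAt hl k q ∈ (spider p l).edgeSet := by
  unfold edgeAt
  split
  · rw [SimpleGraph.mem_edgeSet]
    exact Or.inl ⟨_, rfl, rfl, by simp [vtx, Nat.mod_eq_of_lt (hl k)]⟩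
  · rename_i h0
    rw [SimpleGraph.mem_edgeSet]
    refine Or.inr (Or.inr ⟨_, _, rfl, rfl, rfl, Or.inl ?_⟩)
    simp only
    rw [Nat.mod_eq_of_lt (by omega), Nat.mod_eq_of_lt hq]
    omega

lemma mem_edgeAt (hl : ∀ i, 0 < l i) {k : Fin p} {q : ℕ} (hq : q < l k)
    {v : Option (Σ i : Fin p, Fin (l i))} (hv : v ∈ edgeAt hl k q) :
    (q = 0 ∧ (v = none ∨ v = vtx hl k 0)) ∨
      (1 ≤ q ∧ (v = vtx hl k (q-1) ∨ v = vtx hl k q)) := by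
  unfold edgeAt at hv
  split at hv
  · rename_i h; subst h
    left; exact ⟨rfl, by simpa using hv⟩
  · rename_i h
    right; exact ⟨by omega, by simpa using hv⟩

lemma edgeAt_inj (hl : ∀ i, 0 < l i) {k k' : Fin p} {q q' : ℕ}
    (hq : q < l k) (hq' : q' < l k') (h : edgeAt hl k q = edgeAt hl k' q') :
    k = k' ∧ q = q' := by
  unfold edgeAt at h
  split at h <;> split at h <;> rename_i h1 h2
  · subst h1; subst h2
    rw [Sym2.eq_iff] at h
    rcases h with ⟨-, h⟩ | ⟨h, -⟩
    · exact ⟨(vtx_inj hl (hl k) (hl k') h).1, rfl⟩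
    · exact absurd h.symm (vtx_ne_none hl k' 0)
  · subst h1
    rw [Sym2.eq_iff] at h
    rcases h with ⟨h, -⟩ | ⟨h, -⟩
    · exact absurd h.symm (vtx_ne_none hl k' (q'-1))
    · exact absurd h.symm (vtx_ne_none hl k' q')
  · subst h2
    rw [Sym2.eq_iff] at h
    rcases h with ⟨h, -⟩ | ⟨-, h⟩
    · exact absurd h (vtx_ne_none hl k (q-1))
    · exact absurd h (vtx_ne_none hl k q)
  · rw [Sym2.eq_iff] at h
    rcases h with ⟨ha, hb⟩ | ⟨ha, hb⟩
    · obtain ⟨hk, hq2⟩ := vtx_inj hl (by omega) (by omega) ha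
      obtain ⟨-, hq3⟩ := vtx_inj hl hq hq' hb
      exact ⟨hk, hq3⟩
    · obtain ⟨hk, hq2⟩ := vtx_inj hl (by omega) hq' ha
      obtain ⟨-, hq3⟩ := vtx_inj hl hq (by omega) hb
      exfalso; omega

lemma edge_eq_edgeAt (hl : ∀ i, 0 < l i) {e : Sym2 (Option (Σ i : Fin p, Fin (l i)))}
    (he : e ∈ (spider p l).edgeSet) : ∃ k q, q < l k ∧ e = edgeAt hl k q := by
  induction e with
  | _ u v =>
    rw [SimpleGraph.mem_edgeSet] at he
    rcases he with ⟨a, h1, h2, h3⟩ | ⟨a, h1, h2, h3⟩ | ⟨a, b, h1, h2, h3, h4⟩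
    · obtain ⟨i, x⟩ := a
      refine ⟨i, 0, hl i, ?_⟩
      subst h1; subst h2
      have hx : x = ⟨0 % l i, Nat.mod_lt _ (hl i)⟩ := by
        apply Fin.ext; simpa using h3
      subst hx
      simp [edgeAt, vtx]
    · obtain ⟨i, x⟩ := a
      refine ⟨i, 0, hl i, ?_⟩
      subst h1; subst h2
      have hx : x = ⟨0 % l i, Nat.mod_lt _ (hl i)⟩ := by
        apply Fin.ext; simpa using h3
      subst hx
      simp only [edgeAt, vtx, if_pos rfl]
      exact Sym2.eq_swap
    · subst h1; subst h2
      obtain ⟨i, x⟩ := a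
      obtain ⟨i', y⟩ := b
      simp only at h3 h4
      subst h3
      rcases h4 with h4 | h4
      · refine ⟨i, y.val, y.isLt, ?_⟩
        have h0 : (y:ℕ) ≠ 0 := by omega
        have hx : x = ⟨(y.val - 1) % l i, Nat.mod_lt _ (hl i)⟩ := by
          apply Fin.ext; simp [Nat.mod_eq_of_lt (show (y:ℕ)-1 < l i by omega)]; omega
        have hy : y = ⟨y.val % l i, Nat.mod_lt _ (hl i)⟩ := by
          apply Fin.ext; simp [Nat.mod_eq_of_lt y.isLt]
        simp only [edgeAt, if_neg h0, vtx]
        rw [← hx, ← hy]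
      · refine ⟨i, x.val, x.isLt, ?_⟩
        have h0 : (x:ℕ) ≠ 0 := by omega
        have hy : y = ⟨(x.val - 1) % l i, Nat.mod_lt _ (hl i)⟩ := by
          apply Fin.ext; simp [Nat.mod_eq_of_lt (show (x:ℕ)-1 < l i by omega)]; omega
        have hx : x = ⟨x.val % l i, Nat.mod_lt _ (hl i)⟩ := by
          apply Fin.ext; simp [Nat.mod_eq_of_lt x.isLt]
        simp only [edgeAt, if_neg h0, vtx]
        rw [← hy, ← hx]
        exact Sym2.eq_swap

----------------------------------------------------------------
-- matching machinery
----------------------------------------------------------------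

end SpiderAux

section MatchingGeneric

variable {W : Type*}

lemma matching_card_le_cover [DecidableEq W] [Nonempty W] {G : SimpleGraph W}
    {s : Finset (Sym2 W)} (hs : IsMatchingIn G s) {C : Finset W}
    (hC : ∀ e ∈ G.edgeSet, ∃ v, v ∈ C ∧ v ∈ e) : s.card ≤ C.card := by
  classical
  have key : ∀ e ∈ s, ∃ v, v ∈ C ∧ v ∈ e := fun e he => hC e (hs.1 e he)
  set g : Sym2 W → W := fun e =>
    if h : ∃ v, v ∈ C ∧ v ∈ e then h.choose else Classical.arbitrary W with hg
  apply Finset.card_le_card_of_injOn g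
  · intro e he
    have h := key e he
    simp only [hg, dif_pos h]
    exact h.choose_spec.1
  · intro e₁ he₁ e₂ he₂ heq
    by_contra hne
    have h₁ := key e₁ he₁
    have h₂ := key e₂ he₂
    have hv₁ : g e₁ ∈ e₁ := by simp only [hg, dif_pos h₁]; exact h₁.choose_spec.2
    have hv₂ : g e₂ ∈ e₂ := by simp only [hg, dif_pos h₂]; exact h₂.choose_spec.2
    exact hs.2 e₁ he₁ e₂ he₂ hne (g e₁) hv₁ (heq ▸ hv₂)

lemma bddAbove_matchingSet [Fintype W] [DecidableEq W] (G : SimpleGraph W) :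
    BddAbove {m | ∃ s : Finset (Sym2 W), IsMatchingIn G s ∧ s.card = m} := by
  refine ⟨Fintype.card (Sym2 W), ?_⟩
  rintro m ⟨s, -, rfl⟩
  exact Finset.card_le_univ s

lemma le_matchingNumber [Fintype W] [DecidableEq W] {G : SimpleGraph W}
    {s : Finset (Sym2 W)} (h : IsMatchingIn G s) : s.card ≤ matchingNumber G :=
  le_csSup (bddAbove_matchingSet G) ⟨s, h, rfl⟩

lemma empty_isMatchingIn (G : SimpleGraph W) : IsMatchingIn G (∅ : Finset (Sym2 W)) := by
  constructor
  · intro e he; exact absurd he (Finset.notMem_empty e)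
  · intro e he; exact absurd he (Finset.notMem_empty e)

lemma matchingNumber_le_of_cover [DecidableEq W] [Nonempty W] {G : SimpleGraph W}
    {C : Finset W} (hC : ∀ e ∈ G.edgeSet, ∃ v, v ∈ C ∧ v ∈ e) :
    matchingNumber G ≤ C.card := by
  have h0 : (0:ℕ) ∈ {m | ∃ s : Finset (Sym2 W), IsMatchingIn G s ∧ s.card = m} :=
    ⟨∅, empty_isMatchingIn G, rfl⟩
  apply csSup_le ⟨0, h0⟩
  rintro m ⟨s, hs, rfl⟩
  exact matching_card_le_cover hs hC

lemma matchingNumber_mono [Fintype W] [DecidableEq W] {G H : SimpleGraph W}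
    (h : G ≤ H) : matchingNumber G ≤ matchingNumber H := by
  have h0 : (0:ℕ) ∈ {m | ∃ s : Finset (Sym2 W), IsMatchingIn G s ∧ s.card = m} :=
    ⟨∅, empty_isMatchingIn G, rfl⟩
  apply csSup_le ⟨0, h0⟩
  rintro m ⟨s, hs, rfl⟩
  exact le_matchingNumber ⟨fun e he => SimpleGraph.edgeSet_mono h (hs.1 e he), hs.2⟩

end MatchingGeneric

/-- arithmetic progression of step 2: `{s, s+2, …, s+2(k-1)}` -/
def AP (s k : ℕ) : Finset ℕ := (Finset.range k).image fun m => s + 2*m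

lemma mem_AP {q s k : ℕ} : q ∈ AP s k ↔ ∃ m, m < k ∧ s + 2*m = q := by
  simp [AP]

lemma card_AP (s k : ℕ) : (AP s k).card = k := by
  rw [AP, Finset.card_image_of_injective _ (fun a b h => by omega)]
  exact Finset.card_range k

namespace SpiderAux

variable {p : ℕ} {l : Fin p → ℕ}

/-- the candidate matching determined by position sets `S k` on each leg -/
def legMatch (hl : ∀ i, 0 < l i) (S : Fin p → Finset ℕ) :
    Finset (Sym2 (Option (Σ i : Fin p, Fin (l i)))) :=
  Finset.univ.biUnion fun k => (S k).image (edgeAt hl k)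

lemma legMatch_card (hl : ∀ i, 0 < l i) (S : Fin p → Finset ℕ)
    (hb : ∀ k, ∀ q ∈ S k, q < l k) : (legMatch hl S).card = ∑ k, (S k).card := by
  rw [legMatch, Finset.card_biUnion]
  · refine Finset.sum_congr rfl fun k _ => ?_
    apply Finset.card_image_of_injOn
    intro q hq q' hq' h
    exact (edgeAt_inj hl (hb k q hq) (hb k q' hq') h).2
  · intro k _ k' _ hkk'
    rw [Function.onFun, Finset.disjoint_left]
    intro e he he'
    simp only [Finset.mem_image] at he he'
    obtain ⟨q, hq, rfl⟩ := he
    obtain ⟨q', hq', h⟩ := he'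
    exact hkk' ((edgeAt_inj hl (hb k' q' hq') (hb k q hq) h).1).symm

lemma mem_edgeAt' (hl : ∀ i, 0 < l i) {k : Fin p} {q : ℕ} (hq : q < l k)
    {v : Option (Σ i : Fin p, Fin (l i))} (hv : v ∈ edgeAt hl k q) :
    (v = none ∧ q = 0) ∨ ∃ a, a < l k ∧ v = vtx hl k a ∧ (a = q ∨ a + 1 = q) := by
  rcases mem_edgeAt hl hq hv with ⟨hq0, hv⟩ | ⟨hq1, hv⟩
  · rcases hv with hv | hv
    · exact Or.inl ⟨hv, hq0⟩
    · exact Or.inr ⟨0, hl k, hv, Or.inl hq0.symm⟩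
  · rcases hv with hv | hv
    · exact Or.inr ⟨q - 1, by omega, hv, Or.inr (by omega)⟩
    · exact Or.inr ⟨q, hq, hv, Or.inl rfl⟩

lemma legMatch_isMatching (hl : ∀ i, 0 < l i) (S : Fin p → Finset ℕ)
    (hb : ∀ k, ∀ q ∈ S k, q < l k)
    (hgap : ∀ k, ∀ q ∈ S k, ∀ q' ∈ S k, q < q' → q + 2 ≤ q')
    (hctr : ∀ k k', 0 ∈ S k → 0 ∈ S k' → k = k')
    (D : Set (Sym2 (Option (Σ i : Fin p, Fin (l i)))))
    (hD : ∀ k, ∀ q ∈ S k, edgeAt hl k q ∉ D) :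
    IsMatchingIn ((spider p l).deleteEdges D) (legMatch hl S) := by
  constructor
  · intro e he
    simp only [legMatch, Finset.mem_biUnion, Finset.mem_image] at he
    obtain ⟨k, -, q, hq, rfl⟩ := he
    rw [SimpleGraph.edgeSet_deleteEdges]
    exact ⟨edgeAt_mem hl (hb k q hq), hD k q hq⟩
  · intro e₁ he₁ e₂ he₂ hne v hv₁ hv₂
    simp only [legMatch, Finset.mem_biUnion, Finset.mem_image] at he₁ he₂
    obtain ⟨k, -, q, hq, rfl⟩ := he₁
    obtain ⟨k', -, q', hq', rfl⟩ := he₂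
    rcases mem_edgeAt' hl (hb k q hq) hv₁ with ⟨rfl, hq0⟩ | ⟨a, ha, rfl, haq⟩
    · rcases mem_edgeAt' hl (hb k' q' hq') hv₂ with ⟨-, hq0'⟩ | ⟨a, ha, hvn, -⟩
      · subst hq0; subst hq0'
        exact hne (by rw [hctr k k' hq hq'])
      · exact vtx_ne_none hl k' a hvn.symm
    · rcases mem_edgeAt' hl (hb k' q' hq') hv₂ with ⟨hvn, -⟩ | ⟨a', ha', hvn, haq'⟩
      · exact vtx_ne_none hl k a hvn
      · obtain ⟨rfl, rfl⟩ := vtx_inj hl ha ha' hvn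
        have hqq' : q ≠ q' := fun h => hne (by rw [h])
        rcases Nat.lt_or_ge q q' with h | h
        · have := hgap k q hq q' hq' h
          omega
        · have : q' < q := by omega
          have := hgap k q' hq' q hq this
          omega

lemma sum_le_matchingNumber (hl : ∀ i, 0 < l i) (S : Fin p → Finset ℕ)
    (hb : ∀ k, ∀ q ∈ S k, q < l k)
    (hgap : ∀ k, ∀ q ∈ S k, ∀ q' ∈ S k, q < q' → q + 2 ≤ q')
    (hctr : ∀ k k', 0 ∈ S k → 0 ∈ S k' → k = k')
    (D : Set (Sym2 (Option (Σ i : Fin p, Fin (l i)))))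
    (hD : ∀ k, ∀ q ∈ S k, edgeAt hl k q ∉ D) :
    (∑ k, (S k).card) ≤ matchingNumber ((spider p l).deleteEdges D) := by
  classical
  rw [← legMatch_card hl S hb]
  exact le_matchingNumber (legMatch_isMatching hl S hb hgap hctr D hD)

end SpiderAux

----------------------------------------------------------------
-- numeric position sets
----------------------------------------------------------------

def Std (L : ℕ) : Finset ℕ := AP 1 (L/2)
def CStd (L : ℕ) : Finset ℕ := AP 0 ((L+1)/2)
def SOne (L q : ℕ) : Finset ℕ :=
  if L % 2 = 0 ∧ q % 2 = 1 then AP 0 ((q+1)/2) ∪ AP (q+1) ((L-q)/2)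
  else AP 1 (q/2) ∪ AP (q+1) ((L-q)/2)
def STwoC (L q₁ q₂ : ℕ) : Finset ℕ :=
  AP 0 ((q₁+1)/2) ∪ AP (q₁+1) ((q₂-q₁)/2) ∪ AP (q₂+1) ((L-q₂)/2)
def STwoF (L q₁ q₂ : ℕ) : Finset ℕ :=
  AP 1 (q₁/2) ∪ AP (q₁+1) ((q₂-q₁)/2) ∪ AP (q₂+1) ((L-q₂)/2)

lemma card_AP2 {s1 k1 s2 k2 : ℕ} (h : s1 + 2*k1 ≤ s2 + 1) :
    (AP s1 k1 ∪ AP s2 k2).card = k1 + k2 := by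
  rw [Finset.card_union_of_disjoint, card_AP, card_AP]
  rw [Finset.disjoint_left]
  intro a ha hb
  rw [mem_AP] at ha hb
  obtain ⟨m, hm, rfl⟩ := ha
  obtain ⟨m', hm', h'⟩ := hb
  omega

lemma card_AP3 {s1 k1 s2 k2 s3 k3 : ℕ} (h12 : s1 + 2*k1 ≤ s2 + 1)
    (h23 : s2 + 2*k2 ≤ s3 + 1) (h13 : s1 + 2*k1 ≤ s3 + 1) :
    (AP s1 k1 ∪ AP s2 k2 ∪ AP s3 k3).card = k1 + k2 + k3 := by
  rw [Finset.card_union_of_disjoint, card_AP2 h12, card_AP]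
  rw [Finset.disjoint_left]
  intro a ha hb
  rw [Finset.mem_union, mem_AP, mem_AP] at ha
  rw [mem_AP] at hb
  obtain ⟨m', hm', h'⟩ := hb
  rcases ha with ⟨m, hm, rfl⟩ | ⟨m, hm, rfl⟩ <;> omega

lemma mem_AP2 {a s1 k1 s2 k2 : ℕ} (h : a ∈ AP s1 k1 ∪ AP s2 k2) :
    ∃ m, (m < k1 ∧ s1 + 2*m = a) ∨ (m < k2 ∧ s2 + 2*m = a) := by
  rw [Finset.mem_union, mem_AP, mem_AP] at h
  rcases h with ⟨m, hm⟩ | ⟨m, hm⟩ <;> exact ⟨m, by omega⟩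

lemma mem_AP3 {a s1 k1 s2 k2 s3 k3 : ℕ} (h : a ∈ AP s1 k1 ∪ AP s2 k2 ∪ AP s3 k3) :
    ∃ m, (m < k1 ∧ s1 + 2*m = a) ∨ (m < k2 ∧ s2 + 2*m = a) ∨ (m < k3 ∧ s3 + 2*m = a) := by
  rw [Finset.mem_union, Finset.mem_union, mem_AP, mem_AP, mem_AP] at h
  rcases h with (⟨m, hm⟩ | ⟨m, hm⟩) | ⟨m, hm⟩ <;> exact ⟨m, by omega⟩

-- properties of Std
lemma Std_lt {L a : ℕ} (h : a ∈ Std L) : a < L := by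
  rw [Std, mem_AP] at h; obtain ⟨m, hm, rfl⟩ := h; omega
lemma Std_gap {L a b : ℕ} (ha : a ∈ Std L) (hb : b ∈ Std L) (h : a < b) : a + 2 ≤ b := by
  rw [Std, mem_AP] at ha hb
  obtain ⟨m, hm, rfl⟩ := ha; obtain ⟨m', hm', rfl⟩ := hb; omega
lemma Std_zero {L : ℕ} : 0 ∉ Std L := by
  rw [Std, mem_AP]; rintro ⟨m, hm, h⟩; omega
lemma Std_card (L : ℕ) : (Std L).card = L / 2 := card_AP 1 (L/2)

-- properties of CStd
lemma CStd_lt {L a : ℕ} (h : a ∈ CStd L) : a < L := by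
  rw [CStd, mem_AP] at h; obtain ⟨m, hm, rfl⟩ := h; omega
lemma CStd_gap {L a b : ℕ} (ha : a ∈ CStd L) (hb : b ∈ CStd L) (h : a < b) : a + 2 ≤ b := by
  rw [CStd, mem_AP] at ha hb
  obtain ⟨m, hm, rfl⟩ := ha; obtain ⟨m', hm', rfl⟩ := hb; omega
lemma CStd_card (L : ℕ) : (CStd L).card = (L+1) / 2 := card_AP 0 ((L+1)/2)

-- properties of SOne
lemma SOne_lt {L q a : ℕ} (hq : q < L) (h : a ∈ SOne L q) : a < L := by
  rw [SOne] at h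
  split at h <;> obtain ⟨m, hm⟩ := mem_AP2 h <;> omega
lemma SOne_gap {L q a b : ℕ} (ha : a ∈ SOne L q) (hb : b ∈ SOne L q) (h : a < b) :
    a + 2 ≤ b := by
  by_cases hc : L % 2 = 0 ∧ q % 2 = 1 <;>
    [rw [SOne, if_pos hc] at ha hb; rw [SOne, if_neg hc] at ha hb] <;>
    obtain ⟨m, hm⟩ := mem_AP2 ha <;> obtain ⟨m', hm'⟩ := mem_AP2 hb <;> omega
lemma SOne_avoid {L q : ℕ} : q ∉ SOne L q := by
  rw [SOne]
  intro h
  split at h <;> obtain ⟨m, hm⟩ := mem_AP2 h <;> omega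
lemma SOne_zero {L q : ℕ} (h : 0 ∈ SOne L q) : L % 2 = 0 ∧ q % 2 = 1 := by
  rw [SOne] at h
  split at h
  · assumption
  · obtain ⟨m, hm⟩ := mem_AP2 h; omega
lemma SOne_card {L q : ℕ} (hq : q < L) : L / 2 ≤ (SOne L q).card := by
  rw [SOne]
  split <;> rename_i hc
  · rw [card_AP2 (by omega)]; omega
  · rw [card_AP2 (by omega)]; omega

-- properties of STwoC (for odd L)
lemma STwoC_lt {L q₁ q₂ a : ℕ} (h12 : q₁ < q₂) (h2 : q₂ < L) (h : a ∈ STwoC L q₁ q₂) :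
    a < L := by
  obtain ⟨m, hm⟩ := mem_AP3 h; omega
lemma STwoC_gap {L q₁ q₂ a b : ℕ} (h12 : q₁ < q₂) (ha : a ∈ STwoC L q₁ q₂)
    (hb : b ∈ STwoC L q₁ q₂) (h : a < b) : a + 2 ≤ b := by
  obtain ⟨m, hm⟩ := mem_AP3 ha
  obtain ⟨m', hm'⟩ := mem_AP3 hb
  omega
lemma STwoC_avoid₁ {L q₁ q₂ : ℕ} (h12 : q₁ < q₂) : q₁ ∉ STwoC L q₁ q₂ := by
  intro h; obtain ⟨m, hm⟩ := mem_AP3 h; omega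
lemma STwoC_avoid₂ {L q₁ q₂ : ℕ} (h12 : q₁ < q₂) : q₂ ∉ STwoC L q₁ q₂ := by
  intro h; obtain ⟨m, hm⟩ := mem_AP3 h; omega
lemma STwoC_card {L q₁ q₂ : ℕ} (h12 : q₁ < q₂) (h2 : q₂ < L) (hodd : L % 2 = 1) :
    L / 2 ≤ (STwoC L q₁ q₂).card := by
  rw [STwoC, card_AP3 (by omega) (by omega) (by omega)]
  omega

-- properties of STwoF (for even L)
lemma STwoF_lt {L q₁ q₂ a : ℕ} (h12 : q₁ < q₂) (h2 : q₂ < L) (h : a ∈ STwoF L q₁ q₂) :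
    a < L := by
  obtain ⟨m, hm⟩ := mem_AP3 h; omega
lemma STwoF_gap {L q₁ q₂ a b : ℕ} (h12 : q₁ < q₂) (ha : a ∈ STwoF L q₁ q₂)
    (hb : b ∈ STwoF L q₁ q₂) (h : a < b) : a + 2 ≤ b := by
  obtain ⟨m, hm⟩ := mem_AP3 ha
  obtain ⟨m', hm'⟩ := mem_AP3 hb
  omega
lemma STwoF_avoid₁ {L q₁ q₂ : ℕ} (h12 : q₁ < q₂) : q₁ ∉ STwoF L q₁ q₂ := by
  intro h; obtain ⟨m, hm⟩ := mem_AP3 h; omega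
lemma STwoF_avoid₂ {L q₁ q₂ : ℕ} (h12 : q₁ < q₂) : q₂ ∉ STwoF L q₁ q₂ := by
  intro h; obtain ⟨m, hm⟩ := mem_AP3 h; omega
lemma STwoF_zero {L q₁ q₂ : ℕ} : 0 ∉ STwoF L q₁ q₂ := by
  intro h; obtain ⟨m, hm⟩ := mem_AP3 h; omega
lemma STwoF_card {L q₁ q₂ : ℕ} (h12 : q₁ < q₂) (h2 : q₂ < L) :
    L / 2 ≤ (STwoF L q₁ q₂).card + 1 := by
  rw [STwoF, card_AP3 (by omega) (by omega) (by omega)]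
  omega

namespace SpiderAux

variable {p : ℕ} {l : Fin p → ℕ}

lemma sum_peel₂ {i k₀ : Fin p} (hik : i ≠ k₀) (f g : Fin p → ℕ)
    (h : ∀ k, k ≠ i → k ≠ k₀ → g k ≤ f k) (hsum : g i + g k₀ ≤ f i + f k₀) :
    ∑ k, g k ≤ ∑ k, f k := by
  classical
  rw [← Finset.add_sum_erase _ f (Finset.mem_univ i),
      ← Finset.add_sum_erase _ g (Finset.mem_univ i),
      ← Finset.add_sum_erase _ f (Finset.mem_erase.2 ⟨hik.symm, Finset.mem_univ k₀⟩),
      ← Finset.add_sum_erase _ g (Finset.mem_erase.2 ⟨hik.symm, Finset.mem_univ k₀⟩)]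
  have hrest : ∑ k ∈ (Finset.univ.erase i).erase k₀, g k ≤
      ∑ k ∈ (Finset.univ.erase i).erase k₀, f k := by
    refine Finset.sum_le_sum fun k hk => ?_
    rw [Finset.mem_erase, Finset.mem_erase] at hk
    exact h k hk.2.1 hk.1
  omega

lemma lemB_same (hl0 : ∀ i, 0 < l i) (hp : 2 ≤ p)
    (huniq : ∀ k k' : Fin p, l k % 2 = 0 → l k' % 2 = 0 → k = k')
    {i : Fin p} {q₁ q₂ : ℕ} (h12 : q₁ < q₂) (h2 : q₂ < l i) :
    (∑ k, l k / 2) ≤ matchingNumber ((spider p l).deleteEdges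
      {edgeAt hl0 i q₁, edgeAt hl0 i q₂}) := by
  classical
  have hq₁ : q₁ < l i := by omega
  by_cases hpar : l i % 2 = 1
  · -- deletions on an odd leg: use the center-allowed two-hole pattern there
    set S : Fin p → Finset ℕ := fun k => if k = i then STwoC (l i) q₁ q₂ else Std (l k)
      with hS
    have hSi : S i = STwoC (l i) q₁ q₂ := by simp [hS]
    have hSo : ∀ k, k ≠ i → S k = Std (l k) := by intro k h; simp [hS, h]
    have hmem : ∀ k q, q ∈ S k →
        (k = i ∧ q ∈ STwoC (l i) q₁ q₂) ∨ (k ≠ i ∧ q ∈ Std (l k)) := by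
      intro k q hq
      by_cases h : k = i
      · subst h; rw [hSi] at hq; exact Or.inl ⟨rfl, hq⟩
      · rw [hSo k h] at hq; exact Or.inr ⟨h, hq⟩
    have hb : ∀ k, ∀ q ∈ S k, q < l k := by
      intro k q hq
      rcases hmem k q hq with ⟨rfl, hq⟩ | ⟨-, hq⟩
      · exact STwoC_lt h12 h2 hq
      · exact Std_lt hq
    refine le_trans ?_ (sum_le_matchingNumber hl0 S hb ?_ ?_ _ ?_)
    · refine Finset.sum_le_sum fun k _ => ?_
      by_cases h : k = i
      · subst h; rw [hSi]; exact STwoC_card h12 h2 hpar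
      · rw [hSo k h, Std_card]
    · intro k q hq q' hq' hlt
      rcases hmem k q hq with ⟨hki, hq0⟩ | ⟨hki, hq0⟩
      · rw [hki, hSi] at hq'; exact STwoC_gap h12 hq0 hq' hlt
      · rw [hSo k hki] at hq'; exact Std_gap hq0 hq' hlt
    · intro k k' hk hk'
      rcases hmem k 0 hk with ⟨hki, -⟩ | ⟨-, h⟩
      · rcases hmem k' 0 hk' with ⟨hki', -⟩ | ⟨-, h'⟩
        · rw [hki, hki']
        · exact absurd h' Std_zero
      · exact absurd h Std_zero
    · intro k q hqS hmm2
      simp only [Set.mem_insert_iff, Set.mem_singleton_iff] at hmm2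
      rcases hmem k q hqS with ⟨hki, hq0⟩ | ⟨hki, hq0⟩
      · rcases hmm2 with h | h
        · exact STwoC_avoid₁ h12 ((edgeAt_inj hl0 (hb k q hqS) hq₁ h).2 ▸ hq0)
        · exact STwoC_avoid₂ h12 ((edgeAt_inj hl0 (hb k q hqS) h2 h).2 ▸ hq0)
      · rcases hmm2 with h | h
        · exact hki (edgeAt_inj hl0 (hb k q hqS) hq₁ h).1
        · exact hki (edgeAt_inj hl0 (hb k q hqS) h2 h).1
  · -- deletions on the (unique) even leg: free pattern there, upgrade an odd leg
    have hpar' : l i % 2 = 0 := by omega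
    obtain ⟨k₀, hk₀⟩ : ∃ k₀ : Fin p, k₀ ≠ i :=
      Fintype.exists_ne_of_one_lt_card (by simpa using by omega : 1 < Fintype.card (Fin p)) i
    have hk₀odd : l k₀ % 2 = 1 := by
      rcases Nat.mod_two_eq_zero_or_one (l k₀) with h | h
      · exact absurd (huniq k₀ i h hpar') hk₀
      · exact h
    set S : Fin p → Finset ℕ := fun k =>
      if k = i then STwoF (l i) q₁ q₂ else if k = k₀ then CStd (l k₀) else Std (l k) with hS
    have hSi : S i = STwoF (l i) q₁ q₂ := by simp [hS]
    have hSk₀ : S k₀ = CStd (l k₀) := by simp [hS, hk₀]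
    have hSo : ∀ k, k ≠ i → k ≠ k₀ → S k = Std (l k) := by
      intro k h h'; simp [hS, h, h']
    have hmem : ∀ k q, q ∈ S k → (k = i ∧ q ∈ STwoF (l i) q₁ q₂) ∨
        (k = k₀ ∧ q ∈ CStd (l k₀)) ∨ (k ≠ i ∧ k ≠ k₀ ∧ q ∈ Std (l k)) := by
      intro k q hq
      by_cases h : k = i
      · subst h; rw [hSi] at hq; exact Or.inl ⟨rfl, hq⟩
      · by_cases h' : k = k₀
        · subst h'; rw [hSk₀] at hq; exact Or.inr (Or.inl ⟨rfl, hq⟩)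
        · rw [hSo k h h'] at hq; exact Or.inr (Or.inr ⟨h, h', hq⟩)
    have hb : ∀ k, ∀ q ∈ S k, q < l k := by
      intro k q hq
      rcases hmem k q hq with ⟨rfl, hq⟩ | ⟨rfl, hq⟩ | ⟨-, -, hq⟩
      · exact STwoF_lt h12 h2 hq
      · exact CStd_lt hq
      · exact Std_lt hq
    refine le_trans ?_ (sum_le_matchingNumber hl0 S hb ?_ ?_ _ ?_)
    · refine sum_peel₂ (Ne.symm hk₀) (fun k => (S k).card) (fun k => l k / 2) ?_ ?_
      · intro k hk hk'
        show l k / 2 ≤ (S k).card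
        rw [hSo k hk hk', Std_card]
      · show l i / 2 + l k₀ / 2 ≤ (S i).card + (S k₀).card
        rw [hSi, hSk₀, CStd_card]
        have := STwoF_card h12 h2
        omega
    · intro k q hq q' hq' hlt
      rcases hmem k q hq with ⟨hki, hq0⟩ | ⟨hki, hq0⟩ | ⟨hk, hk', hq0⟩
      · rw [hki, hSi] at hq'; exact STwoF_gap h12 hq0 hq' hlt
      · rw [hki, hSk₀] at hq'; exact CStd_gap hq0 hq' hlt
      · rw [hSo k hk hk'] at hq'; exact Std_gap hq0 hq' hlt
    · intro k k' hk hk'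
      have h1 : ∀ k'', 0 ∈ S k'' → k'' = k₀ := by
        intro k'' h
        rcases hmem k'' 0 h with ⟨hki, h⟩ | ⟨hki, -⟩ | ⟨-, -, h⟩
        · exact absurd h STwoF_zero
        · exact hki
        · exact absurd h Std_zero
      rw [h1 k hk, h1 k' hk']
    · intro k q hqS hmm2
      simp only [Set.mem_insert_iff, Set.mem_singleton_iff] at hmm2
      rcases hmem k q hqS with ⟨hki, hq0⟩ | ⟨hki, hq0⟩ | ⟨hk, hk', hq0⟩
      · rcases hmm2 with h | h
        · exact STwoF_avoid₁ h12 ((edgeAt_inj hl0 (hb k q hqS) hq₁ h).2 ▸ hq0)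
        · exact STwoF_avoid₂ h12 ((edgeAt_inj hl0 (hb k q hqS) h2 h).2 ▸ hq0)
      · rcases hmm2 with h | h
        · exact hk₀ (hki ▸ (edgeAt_inj hl0 (hb k q hqS) hq₁ h).1)
        · exact hk₀ (hki ▸ (edgeAt_inj hl0 (hb k q hqS) h2 h).1)
      · rcases hmm2 with h | h
        · exact hk (edgeAt_inj hl0 (hb k q hqS) hq₁ h).1
        · exact hk (edgeAt_inj hl0 (hb k q hqS) h2 h).1

lemma lemB_diff (hl0 : ∀ i, 0 < l i)
    (huniq : ∀ k k' : Fin p, l k % 2 = 0 → l k' % 2 = 0 → k = k')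
    {i₁ i₂ : Fin p} {q₁ q₂ : ℕ} (hii : i₁ ≠ i₂) (hq1 : q₁ < l i₁) (hq2 : q₂ < l i₂) :
    (∑ k, l k / 2) ≤ matchingNumber ((spider p l).deleteEdges
      {edgeAt hl0 i₁ q₁, edgeAt hl0 i₂ q₂}) := by
  classical
  set S : Fin p → Finset ℕ := fun k =>
    if k = i₁ then SOne (l i₁) q₁ else if k = i₂ then SOne (l i₂) q₂ else Std (l k) with hS
  have hS1 : S i₁ = SOne (l i₁) q₁ := by simp [hS]
  have hS2 : S i₂ = SOne (l i₂) q₂ := by simp [hS, Ne.symm hii, hii]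
  have hSo : ∀ k, k ≠ i₁ → k ≠ i₂ → S k = Std (l k) := by
    intro k h h'; simp [hS, h, h']
  have hmem : ∀ k q, q ∈ S k → (k = i₁ ∧ q ∈ SOne (l i₁) q₁) ∨
      (k = i₂ ∧ q ∈ SOne (l i₂) q₂) ∨ (k ≠ i₁ ∧ k ≠ i₂ ∧ q ∈ Std (l k)) := by
    intro k q hq
    by_cases h : k = i₁
    · subst h; rw [hS1] at hq; exact Or.inl ⟨rfl, hq⟩
    · by_cases h' : k = i₂
      · subst h'; rw [hS2] at hq; exact Or.inr (Or.inl ⟨rfl, hq⟩)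
      · rw [hSo k h h'] at hq; exact Or.inr (Or.inr ⟨h, h', hq⟩)
  have hb : ∀ k, ∀ q ∈ S k, q < l k := by
    intro k q hq
    rcases hmem k q hq with ⟨rfl, hq⟩ | ⟨rfl, hq⟩ | ⟨-, -, hq⟩
    · exact SOne_lt hq1 hq
    · exact SOne_lt hq2 hq
    · exact Std_lt hq
  refine le_trans ?_ (sum_le_matchingNumber hl0 S hb ?_ ?_ _ ?_)
  · refine Finset.sum_le_sum fun k _ => ?_
    by_cases h : k = i₁
    · subst h; rw [hS1]; exact SOne_card hq1
    · by_cases h' : k = i₂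
      · subst h'; rw [hS2]; exact SOne_card hq2
      · rw [hSo k h h', Std_card]
  · intro k q hq q' hq' hlt
    rcases hmem k q hq with ⟨hki, hq0⟩ | ⟨hki, hq0⟩ | ⟨hk, hk', hq0⟩
    · rw [hki, hS1] at hq'; exact SOne_gap hq0 hq' hlt
    · rw [hki, hS2] at hq'; exact SOne_gap hq0 hq' hlt
    · rw [hSo k hk hk'] at hq'; exact Std_gap hq0 hq' hlt
  · intro k k' hk hk'
    have heven : ∀ k'', 0 ∈ S k'' → l k'' % 2 = 0 := by
      intro k'' h
      rcases hmem k'' 0 h with ⟨hki, h⟩ | ⟨hki, h⟩ | ⟨-, -, h⟩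
      · rw [hki]; exact (SOne_zero h).1
      · rw [hki]; exact (SOne_zero h).1
      · exact absurd h Std_zero
    exact huniq k k' (heven k hk) (heven k' hk')
  · intro k q hqS hmm2
    simp only [Set.mem_insert_iff, Set.mem_singleton_iff] at hmm2
    rcases hmem k q hqS with ⟨hki, hq0⟩ | ⟨hki, hq0⟩ | ⟨hk, hk', hq0⟩
    · rcases hmm2 with h | h
      · exact SOne_avoid ((edgeAt_inj hl0 (hb k q hqS) hq1 h).2 ▸ hq0)
      · exact hii (hki ▸ (edgeAt_inj hl0 (hb k q hqS) hq2 h).1)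
    · rcases hmm2 with h | h
      · exact hii ((hki ▸ (edgeAt_inj hl0 (hb k q hqS) hq1 h).1).symm)
      · exact SOne_avoid ((edgeAt_inj hl0 (hb k q hqS) hq2 h).2 ▸ hq0)
    · rcases hmm2 with h | h
      · exact hk (edgeAt_inj hl0 (hb k q hqS) hq1 h).1
      · exact hk' (edgeAt_inj hl0 (hb k q hqS) hq2 h).1

/-- Lemma B: when at most one leg is even, deleting any two edges of the spider
still leaves a matching of size `∑ lᵢ/2`. -/
lemma lemB (hl0 : ∀ i, 0 < l i) (hp : 2 ≤ p)
    (huniq : ∀ k k' : Fin p, l k % 2 = 0 → l k' % 2 = 0 → k = k')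
    {e₁ e₂ : Sym2 (Option (Σ i : Fin p, Fin (l i)))}
    (h₁ : e₁ ∈ (spider p l).edgeSet) (h₂ : e₂ ∈ (spider p l).edgeSet) :
    (∑ k, l k / 2) ≤ matchingNumber ((spider p l).deleteEdges {e₁, e₂}) := by
  obtain ⟨i₁, q₁, hq₁, rfl⟩ := edge_eq_edgeAt hl0 h₁
  obtain ⟨i₂, q₂, hq₂, rfl⟩ := edge_eq_edgeAt hl0 h₂
  by_cases hi : i₁ = i₂
  · subst hi
    rcases Nat.lt_trichotomy q₁ q₂ with h | h | h
    · exact lemB_same hl0 hp huniq h hq₂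
    · subst h
      rw [Set.pair_eq_singleton]
      obtain ⟨i', hi'⟩ : ∃ i' : Fin p, i' ≠ i₁ :=
        Fintype.exists_ne_of_one_lt_card
          (by simpa using by omega : 1 < Fintype.card (Fin p)) i₁
      refine le_trans (lemB_diff hl0 huniq (Ne.symm hi') hq₁ (hl0 i')) ?_
      exact matchingNumber_mono (SimpleGraph.deleteEdges_anti
        (Set.singleton_subset_iff.2 (Set.mem_insert _ _)))
    · rw [Set.pair_comm]
      exact lemB_same hl0 hp huniq h hq₁
  · exact lemB_diff hl0 huniq hi hq₁ hq₂

/-- vertices of the spider specified by per-leg position sets -/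
def legVerts (hl0 : ∀ i, 0 < l i) (f : Fin p → Finset ℕ) :
    Finset (Option (Σ i : Fin p, Fin (l i))) :=
  Finset.univ.biUnion fun k => (f k).image (fun t => vtx hl0 k t)

lemma legVerts_card (hl0 : ∀ i, 0 < l i) (f : Fin p → Finset ℕ)
    (hb : ∀ k, ∀ t ∈ f k, t < l k) : (legVerts hl0 f).card = ∑ k, (f k).card := by
  classical
  rw [legVerts, Finset.card_biUnion]
  · refine Finset.sum_congr rfl fun k _ => ?_
    apply Finset.card_image_of_injOn
    intro t ht t' ht' h
    exact (vtx_inj hl0 (hb k t ht) (hb k t' ht') h).2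
  · intro k _ k' _ hkk'
    rw [Function.onFun, Finset.disjoint_left]
    intro v hv hv'
    simp only [Finset.mem_image] at hv hv'
    obtain ⟨t, ht, rfl⟩ := hv
    obtain ⟨t', ht', h⟩ := hv'
    exact hkk' ((vtx_inj hl0 (hb k' t' ht') (hb k t ht) h).1).symm

lemma none_not_mem_legVerts (hl0 : ∀ i, 0 < l i) (f : Fin p → Finset ℕ) :
    none ∉ legVerts hl0 f := by
  simp only [legVerts, Finset.mem_biUnion, Finset.mem_image]
  rintro ⟨k, -, t, -, h⟩
  exact vtx_ne_none hl0 k t h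

lemma mem_legVerts (hl0 : ∀ i, 0 < l i) (f : Fin p → Finset ℕ) {k : Fin p} {t : ℕ}
    (ht : t ∈ f k) : vtx hl0 k t ∈ legVerts hl0 f := by
  simp only [legVerts, Finset.mem_biUnion, Finset.mem_image]
  exact ⟨k, Finset.mem_univ k, t, ht, rfl⟩

lemma vtx_mem_edgeAt_left (hl0 : ∀ i, 0 < l i) {k : Fin p} {q : ℕ} (hq : 1 ≤ q) :
    vtx hl0 k (q-1) ∈ edgeAt hl0 k q := by
  rw [edgeAt, if_neg (by omega)]
  exact Sym2.mem_mk_left _ _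

lemma vtx_mem_edgeAt_right (hl0 : ∀ i, 0 < l i) {k : Fin p} {q : ℕ} (hq : 1 ≤ q) :
    vtx hl0 k q ∈ edgeAt hl0 k q := by
  rw [edgeAt, if_neg (by omega)]
  exact Sym2.mem_mk_right _ _

lemma none_mem_edgeAt (hl0 : ∀ i, 0 < l i) (k : Fin p) :
    none ∈ edgeAt hl0 k 0 := by
  rw [edgeAt, if_pos rfl]
  exact Sym2.mem_mk_left _ _

lemma mem_Std_of (L t : ℕ) (h1 : t % 2 = 1) (h2 : t < L) : t ∈ Std L := by
  rw [Std, mem_AP]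
  exact ⟨(t-1)/2, by omega, by omega⟩

/-- Lemma A: if leg `j` is even, deleting the edge `(j0,j1)` leaves a graph
with a vertex cover of size `∑ lᵢ/2`; hence its matching number is at most that. -/
lemma lemA (hl : ∀ i, 2 ≤ l i) {j : Fin p} (hj : l j % 2 = 0) :
    matchingNumber ((spider p l).deleteEdges
      {edgeAt (fun i => by have := hl i; omega) j 1}) ≤ ∑ k, l k / 2 := by
  classical
  set hl0 : ∀ i, 0 < l i := fun i => by have := hl i; omega with hhl0
  set f : Fin p → Finset ℕ := fun k => if k = j then AP 2 ((l j - 2)/2) else Std (l k)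
    with hf
  have hfj : f j = AP 2 ((l j - 2)/2) := by simp [hf]
  have hfo : ∀ k, k ≠ j → f k = Std (l k) := by intro k h; simp [hf, h]
  have hb : ∀ k, ∀ t ∈ f k, t < l k := by
    intro k t ht
    by_cases h : k = j
    · rw [h] at ht ⊢
      rw [hfj, mem_AP] at ht
      obtain ⟨m, hm, rfl⟩ := ht
      have := hl j; omega
    · rw [hfo k h] at ht; exact Std_lt ht
  have hcover : ∀ e ∈ ((spider p l).deleteEdges
      {edgeAt hl0 j 1}).edgeSet,
      ∃ v, v ∈ insert none (legVerts hl0 f) ∧ v ∈ e := by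
    intro e he
    rw [SimpleGraph.edgeSet_deleteEdges] at he
    obtain ⟨hee, hne⟩ := he
    obtain ⟨k, q, hq, rfl⟩ := edge_eq_edgeAt hl0 hee
    rcases Nat.eq_zero_or_pos q with rfl | hq1
    · exact ⟨none, Finset.mem_insert_self _ _, none_mem_edgeAt hl0 k⟩
    · by_cases hkj : k = j
      · subst hkj
        have hq2 : 2 ≤ q := by
          by_contra hlt
          have hq1' : q = 1 := by omega
          subst hq1'
          exact hne rfl
        set t : ℕ := if q % 2 = 0 then q else q - 1 with hts
        have htmem : t ∈ f k := by
          rw [hfj, mem_AP]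
          refine ⟨(t-2)/2, by have := hl k; rw [hts]; split <;> omega, by rw [hts]; split <;> omega⟩
        refine ⟨vtx hl0 k t, Finset.mem_insert_of_mem (mem_legVerts hl0 f htmem), ?_⟩
        rw [hts]
        split
        · exact vtx_mem_edgeAt_right hl0 hq1
        · exact vtx_mem_edgeAt_left hl0 hq1
      · set t : ℕ := if q % 2 = 1 then q else q - 1 with hts
        have htmem : t ∈ f k := by
          rw [hfo k hkj]
          refine mem_Std_of _ _ ?_ ?_ <;> rw [hts] <;> split <;> omega
        refine ⟨vtx hl0 k t, Finset.mem_insert_of_mem (mem_legVerts hl0 f htmem), ?_⟩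
        rw [hts]
        split
        · exact vtx_mem_edgeAt_right hl0 hq1
        · exact vtx_mem_edgeAt_left hl0 hq1
  refine le_trans (matchingNumber_le_of_cover hcover) ?_
  rw [Finset.card_insert_of_notMem (none_not_mem_legVerts hl0 f),
    legVerts_card hl0 f hb]
  have hsplit : ∀ g : Fin p → ℕ, ∑ k, g k = g j + ∑ k ∈ Finset.univ.erase j, g k :=
    fun g => (Finset.add_sum_erase _ g (Finset.mem_univ j)).symm
  rw [hsplit (fun k => (f k).card), hsplit (fun k => l k / 2)]
  have h1 : (f j).card = (l j - 2)/2 := by rw [hfj, card_AP]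
  have h2 : ∑ k ∈ Finset.univ.erase j, (f k).card =
      ∑ k ∈ Finset.univ.erase j, l k / 2 := by
    refine Finset.sum_congr rfl fun k hk => ?_
    rw [hfo k (Finset.mem_erase.1 hk).1, Std_card]
  rw [h1, h2]
  have := hl j
  omega

/-- the whole spider has a vertex cover of size `1 + ∑ lᵢ/2`. -/
lemma lemGlobal (hl0 : ∀ i, 0 < l i) :
    matchingNumber (spider p l) ≤ 1 + ∑ k, l k / 2 := by
  classical
  have hb : ∀ k, ∀ t ∈ Std (l k), t < l k := fun k t ht => Std_lt ht
  have hcover : ∀ e ∈ (spider p l).edgeSet,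
      ∃ v, v ∈ insert none (legVerts hl0 (fun k => Std (l k))) ∧ v ∈ e := by
    intro e he
    obtain ⟨k, q, hq, rfl⟩ := edge_eq_edgeAt hl0 he
    rcases Nat.eq_zero_or_pos q with rfl | hq1
    · exact ⟨none, Finset.mem_insert_self _ _, none_mem_edgeAt hl0 k⟩
    · set t : ℕ := if q % 2 = 1 then q else q - 1 with hts
      have htmem : t ∈ Std (l k) := by
        refine mem_Std_of _ _ ?_ ?_ <;> rw [hts] <;> split <;> omega
      refine ⟨vtx hl0 k t, Finset.mem_insert_of_mem (mem_legVerts hl0 _ htmem), ?_⟩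
      rw [hts]
      split
      · exact vtx_mem_edgeAt_right hl0 hq1
      · exact vtx_mem_edgeAt_left hl0 hq1
  refine le_trans (matchingNumber_le_of_cover hcover) ?_
  rw [Finset.card_insert_of_notMem (none_not_mem_legVerts hl0 _),
    legVerts_card hl0 _ hb]
  simp only [Std_card]
  omega

/-- every single-edge-deleted spider still has a matching of size 2. -/
lemma lem2 (hl : ∀ i, 2 ≤ l i) (hp : 2 ≤ p)
    {e : Sym2 (Option (Σ i : Fin p, Fin (l i)))} (he : e ∈ (spider p l).edgeSet) :
    2 ≤ matchingNumber ((spider p l).deleteEdges {e}) := by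
  classical
  set hl0 : ∀ i, 0 < l i := fun i => by have := hl i; omega with hhl0
  obtain ⟨i, q, hq, rfl⟩ := edge_eq_edgeAt hl0 he
  obtain ⟨i', hi'⟩ : ∃ i' : Fin p, i' ≠ i :=
    Fintype.exists_ne_of_one_lt_card (by simpa using by omega : 1 < Fintype.card (Fin p)) i
  set q' : ℕ := if q = 0 then 1 else 0 with hq's
  set S : Fin p → Finset ℕ := fun k => if k = i then {q'} else if k = i' then {1} else ∅
    with hS
  have hSi : S i = {q'} := by simp [hS]
  have hSi' : S i' = {1} := by simp [hS, hi']
  have hSo : ∀ k, k ≠ i → k ≠ i' → S k = ∅ := by intro k h h'; simp [hS, h, h']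
  have hmem : ∀ k t, t ∈ S k → (k = i ∧ t = q') ∨ (k = i' ∧ t = 1) := by
    intro k t ht
    by_cases h : k = i
    · subst h; rw [hSi, Finset.mem_singleton] at ht; exact Or.inl ⟨rfl, ht⟩
    · by_cases h' : k = i'
      · subst h'; rw [hSi', Finset.mem_singleton] at ht; exact Or.inr ⟨rfl, ht⟩
      · rw [hSo k h h'] at ht; exact absurd ht (Finset.notMem_empty t)
  have hb : ∀ k, ∀ t ∈ S k, t < l k := by
    intro k t ht
    rcases hmem k t ht with ⟨rfl, rfl⟩ | ⟨rfl, rfl⟩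
    · have := hl k; rw [hq's]; split <;> omega
    · have := hl k; omega
  have key := sum_le_matchingNumber hl0 S hb ?_ ?_ {edgeAt hl0 i q} ?_
  · refine le_trans ?_ key
    have : ∑ k, (S k).card = (S i).card + ∑ k ∈ Finset.univ.erase i, (S k).card :=
      (Finset.add_sum_erase _ _ (Finset.mem_univ i)).symm
    rw [this, ← Finset.add_sum_erase _ _
      (Finset.mem_erase.2 ⟨hi', Finset.mem_univ i'⟩), hSi, hSi']
    simp only [Finset.card_singleton]
    omega
  · intro k t ht t' ht' hlt
    rcases hmem k t ht with ⟨rfl, rfl⟩ | ⟨rfl, rfl⟩ <;>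
      rcases hmem k t' ht' with ⟨h1, rfl⟩ | ⟨h1, rfl⟩ <;> omega
  · intro k k' hk hk'
    rcases hmem k 0 hk with ⟨rfl, h0⟩ | ⟨rfl, h0⟩ <;>
      rcases hmem k' 0 hk' with ⟨rfl, h0'⟩ | ⟨rfl, h0'⟩ <;> omega
  · intro k t ht hmm
    rw [Set.mem_singleton_iff] at hmm
    rcases hmem k t ht with ⟨hki, rfl⟩ | ⟨hki, rfl⟩
    · have := (edgeAt_inj hl0 (hb k _ ht) hq hmm).2
      rw [hq's] at this
      split at this <;> omega
    · exact hi' (hki ▸ (edgeAt_inj hl0 (hb k _ ht) hq hmm).1)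

end SpiderAux


lemma sym2_rep {α : Type*} (e : Sym2 α) : ∃ x y, e = s(x, y) :=
  Sym2.ind (fun x y => ⟨x, y, rfl⟩) e

lemma enc_inj {n u v u' v' : ℕ} (hv : v < n) (hv' : v' < n)
    (h : u*n + v = u'*n + v') : u = u' ∧ v = v' := by
  rcases Nat.lt_trichotomy u u' with hlt | rfl | hlt
  · exfalso
    have h2 : (u+1)*n ≤ u'*n := Nat.mul_le_mul_right n hlt
    rw [add_mul, one_mul] at h2
    linarith
  · exact ⟨rfl, by omega⟩
  · exfalso
    have h2 : (u'+1)*n ≤ u*n := Nat.mul_le_mul_right n hlt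
    rw [add_mul, one_mul] at h2
    linarith


/-- **Proposition 2.** Let `T` be a spider with `p ≥ 2` legs, each of length at least 2, and
`β(T) = min{ν(T - e) : e ∈ E(T)}`. For every `n ≥ |V(T)| = 1 + Σᵢ lᵢ`,
`ar(K_n, T) ≥ (β(T) - 1)·n - C(β(T), 2) + r`, where `r = 2` if exactly one leg of `T` has
even length and `r = 1` otherwise. -/
theorem antiRamsey_spider_lower (p : ℕ) (hp : 2 ≤ p) (l : Fin p → ℕ) (hl : ∀ i, 2 ≤ l i)
    (β r : ℕ)
    (hβ : β = sInf {m | ∃ e ∈ (spider p l).edgeSet,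
      matchingNumber ((spider p l).deleteEdges {e}) = m})
    (hr1 : (Finset.univ.filter fun i => Even (l i)).card = 1 → r = 2)
    (hr2 : (Finset.univ.filter fun i => Even (l i)).card ≠ 1 → r = 1)
    (n : ℕ) (hn : 1 + ∑ i, l i ≤ n) :
    ((β : ℤ) - 1) * n - (Nat.choose β 2 : ℤ) + r ≤ (antiRamsey n (spider p l) : ℤ) := by
  classical
  have hl0 : ∀ i, 0 < l i := fun i => by have := hl i; omega
  set T := spider p l with hT
  -- basic numeric facts
  have hsum2p : 2*p ≤ ∑ i, l i := by
    calc 2*p = ∑ _i : Fin p, 2 := by rw [Finset.sum_const]; simp [mul_comm]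
    _ ≤ ∑ i, l i := Finset.sum_le_sum fun i _ => hl i
  have hn5 : 5 ≤ n := by omega
  have hM2 : 2 * (∑ i, l i / 2) ≤ ∑ i, l i := by
    rw [Finset.mul_sum]
    exact Finset.sum_le_sum fun i _ => by omega
  -- an edge of the spider
  have h0p : (0:ℕ) < p := by omega
  set e₀ := SpiderAux.edgeAt hl0 ⟨0, h0p⟩ 1 with he₀
  have he₀mem : e₀ ∈ T.edgeSet := SpiderAux.edgeAt_mem hl0 (by have := hl ⟨0,h0p⟩; omega)
  -- facts about β
  have hβ_le : ∀ e ∈ T.edgeSet, β ≤ matchingNumber (T.deleteEdges {e}) := by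
    intro e he
    rw [hβ]
    exact Nat.sInf_le ⟨e, he, rfl⟩
  have hβ_mem : β ∈ {m | ∃ e ∈ T.edgeSet,
      matchingNumber (T.deleteEdges {e}) = m} := by
    rw [hβ]
    exact Nat.sInf_mem ⟨_, e₀, he₀mem, rfl⟩
  obtain ⟨estar, hestar, hβval⟩ := hβ_mem
  have hβ2 : 2 ≤ β := hβval ▸ SpiderAux.lem2 hl hp hestar
  have hβM : β ≤ 1 + ∑ i, l i / 2 := by
    rw [← hβval]
    exact le_trans (matchingNumber_mono (SimpleGraph.deleteEdges_le _))
      (SpiderAux.lemGlobal hl0)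
  have hβn : 2*β ≤ n + 1 := by omega
  have hβn2 : β + 2 ≤ n := by omega
  have hr12 : r = 1 ∨ r = 2 := by
    by_cases h : (Finset.univ.filter fun i => Even (l i)).card = 1
    · exact Or.inr (hr1 h)
    · exact Or.inl (hr2 h)
  -- the coloring
  set cf : ℕ → ℕ → ℕ := fun a b =>
    if min a b < β - 1 then (min a b) * n + (max a b + 2)
    else if r = 2 ∧ min a b = β - 1 ∧ max a b = β then 1 else 0 with hcf
  have hcfsymm : ∀ a b : Fin n, cf a.val b.val = cf b.val a.val := by
    intro a b
    rw [hcf]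
    simp only [min_comm, max_comm]
  set c : Sym2 (Fin n) → ℕ := Sym2.lift ⟨fun u v => cf u.val v.val, hcfsymm⟩ with hc
  have hcmk : ∀ u v : Fin n, c s(u,v) = cf u.val v.val := fun u v => rfl
  -- no rainbow copy
  have hnorb : ¬ HasRainbowCopy c T := by
    rintro ⟨f, hfinj, hrb⟩
    set P0 : Set (Sym2 (Option (Σ i : Fin p, Fin (l i)))) :=
      {e | e ∈ T.edgeSet ∧ c (Sym2.map f e) = 0} with hP0
    set P1 : Set (Sym2 (Option (Σ i : Fin p, Fin (l i)))) :=
      {e | e ∈ T.edgeSet ∧ c (Sym2.map f e) = 1} with hP1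
    have hsub : ∀ (i : ℕ) e e', e ∈ T.edgeSet → e' ∈ T.edgeSet →
        c (Sym2.map f e) = i → c (Sym2.map f e') = i → e = e' := by
      intro i e e' he he' hce hce'
      by_contra hne
      exact hrb e he e' he' hne (by rw [hce, hce'])
    -- upper bound: β - 1 vertices cover the rest
    have hup : matchingNumber (T.deleteEdges (P0 ∪ P1)) ≤ β - 1 := by
      set Tgt : Finset (Fin n) :=
        (Finset.range (β-1)).attachFin
          (fun m hm => by rw [Finset.mem_range] at hm; omega) with hTgt
      have hTgtcard : Tgt.card = β - 1 := by
        rw [hTgt, Finset.card_attachFin, Finset.card_range]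
      have h00 : (0:ℕ) ∈ {m | ∃ s : Finset (Sym2 (Option (Σ i : Fin p, Fin (l i)))),
          IsMatchingIn (T.deleteEdges (P0 ∪ P1)) s ∧ s.card = m} :=
        ⟨∅, empty_isMatchingIn _, rfl⟩
      apply csSup_le ⟨0, h00⟩
      rintro m ⟨s, hs, rfl⟩
      rw [← hTgtcard]
      have hkey : ∀ e ∈ s, ∃ u, u ∈ Tgt ∧ ∃ w, w ∈ e ∧ f w = u := by
        intro e he
        have hee := hs.1 e he
        rw [SimpleGraph.edgeSet_deleteEdges] at hee
        obtain ⟨heT, heD⟩ := hee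
        have h0 : c (Sym2.map f e) ≠ 0 := fun h => heD (Or.inl ⟨heT, h⟩)
        have h1 : c (Sym2.map f e) ≠ 1 := fun h => heD (Or.inr ⟨heT, h⟩)
        obtain ⟨x, y, rfl⟩ := sym2_rep e
        rw [Sym2.map_pair_eq, hcmk] at h0 h1
        simp only [hcf] at h0 h1
        have hmin : min (f x).val (f y).val < β - 1 := by
          by_contra hge
          rw [if_neg hge] at h0 h1
          by_cases hcond : r = 2 ∧ min (f x).val (f y).val = β - 1 ∧
              max (f x).val (f y).val = β
          · rw [if_pos hcond] at h1; exact h1 rfl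
          · rw [if_neg hcond] at h0; exact h0 rfl
        by_cases hx : (f x).val < β - 1
        · refine ⟨f x, ?_, x, Sym2.mem_mk_left _ _, rfl⟩
          rw [hTgt, Finset.mem_attachFin, Finset.mem_range]
          exact hx
        · have hy : (f y).val < β - 1 := by omega
          refine ⟨f y, ?_, y, Sym2.mem_mk_right _ _, rfl⟩
          rw [hTgt, Finset.mem_attachFin, Finset.mem_range]
          exact hy
      set g : Sym2 (Option (Σ i : Fin p, Fin (l i))) → Fin n := fun e =>
        if h : ∃ u, u ∈ Tgt ∧ ∃ w, w ∈ e ∧ f w = u then h.choose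
        else (⟨0, by omega⟩ : Fin n) with hg
      refine Finset.card_le_card_of_injOn g ?_ ?_
      · intro e he
        have h := hkey e he
        simp only [hg, dif_pos h]
        exact h.choose_spec.1
      · intro e₁ h₁ e₂ h₂ heq
        by_contra hne
        have ha := hkey e₁ h₁
        have hb := hkey e₂ h₂
        obtain ⟨w₁, hw₁, hfw₁⟩ : ∃ w, w ∈ e₁ ∧ f w = g e₁ := by
          simp only [hg, dif_pos ha]; exact ha.choose_spec.2
        obtain ⟨w₂, hw₂, hfw₂⟩ : ∃ w, w ∈ e₂ ∧ f w = g e₂ := by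
          simp only [hg, dif_pos hb]; exact hb.choose_spec.2
        have : w₁ = w₂ := hfinj (by rw [hfw₁, hfw₂, heq])
        exact hs.2 e₁ h₁ e₂ h₂ hne w₁ hw₁ (this ▸ hw₂)
    -- lower bound: β
    have hlow : β ≤ matchingNumber (T.deleteEdges (P0 ∪ P1)) := by
      by_cases hA : P0.Nonempty ∧ P1.Nonempty
      · obtain ⟨⟨ea, hea⟩, ⟨eb, heb⟩⟩ := hA
        -- color 1 is used, so r = 2
        have hr2' : r = 2 := by
          have h1 := heb.2
          obtain ⟨x, y, hxy⟩ := sym2_rep eb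
          rw [hxy, Sym2.map_pair_eq, hcmk] at h1
          simp only [hcf] at h1
          by_contra hrne
          split at h1
          · omega
          · split at h1
            · rename_i hcond; exact hrne hcond.1
            · omega
        have hcard1 : (Finset.univ.filter fun i => Even (l i)).card = 1 := by
          by_contra h
          have := hr2 h
          omega
        obtain ⟨j, hj⟩ := Finset.card_eq_one.1 hcard1
        have hjmem : j ∈ Finset.univ.filter fun i => Even (l i) := by
          rw [hj]; exact Finset.mem_singleton_self j
        have hjeven : l j % 2 = 0 := Nat.even_iff.1 (Finset.mem_filter.1 hjmem).2
        have huniq : ∀ k k' : Fin p, l k % 2 = 0 → l k' % 2 = 0 → k = k' := by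
          intro k k' hk hk'
          have hkm : k ∈ Finset.univ.filter fun i => Even (l i) :=
            Finset.mem_filter.2 ⟨Finset.mem_univ _, Nat.even_iff.2 hk⟩
          have hkm' : k' ∈ Finset.univ.filter fun i => Even (l i) :=
            Finset.mem_filter.2 ⟨Finset.mem_univ _, Nat.even_iff.2 hk'⟩
          rw [hj, Finset.mem_singleton] at hkm hkm'
          rw [hkm, hkm']
        have hβ_le_M : β ≤ ∑ i, l i / 2 :=
          le_trans (hβ_le _ (SpiderAux.edgeAt_mem hl0 (by have := hl j; omega)))
            (SpiderAux.lemA hl hjeven)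
        have hMlow : (∑ i, l i / 2) ≤ matchingNumber (T.deleteEdges {ea, eb}) :=
          SpiderAux.lemB hl0 hp huniq hea.1 heb.1
        have hss : P0 ∪ P1 ⊆ {ea, eb} := by
          intro e he
          rcases he with he | he
          · exact Or.inl (hsub 0 e ea he.1 hea.1 he.2 hea.2)
          · exact Or.inr (hsub 1 e eb he.1 heb.1 he.2 heb.2)
        calc β ≤ ∑ i, l i / 2 := hβ_le_M
          _ ≤ matchingNumber (T.deleteEdges {ea, eb}) := hMlow
          _ ≤ matchingNumber (T.deleteEdges (P0 ∪ P1)) :=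
              matchingNumber_mono (SimpleGraph.deleteEdges_anti hss)
      · -- P0 or P1 empty: at most one deleted edge
        obtain ⟨e₃, he₃T, hss⟩ : ∃ e₃, e₃ ∈ T.edgeSet ∧ P0 ∪ P1 ⊆ {e₃} := by
          rcases Set.eq_empty_or_nonempty (P0 ∪ P1) with hemp | ⟨e₃, he₃⟩
          · exact ⟨e₀, he₀mem, by rw [hemp]; exact Set.empty_subset _⟩
          · have he₃T : e₃ ∈ T.edgeSet := by
              rcases he₃ with h | h
              · exact h.1
              · exact h.1
            refine ⟨e₃, he₃T, ?_⟩
            intro e he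
            rw [Set.mem_singleton_iff]
            rw [not_and_or] at hA
            rcases hA with hA | hA
            · rw [Set.not_nonempty_iff_eq_empty] at hA
              have he' : e ∈ P1 := by
                rcases he with h | h
                · rw [hA] at h; exact absurd h (Set.notMem_empty e)
                · exact h
              have he₃' : e₃ ∈ P1 := by
                rcases he₃ with h | h
                · rw [hA] at h; exact absurd h (Set.notMem_empty e₃)
                · exact h
              exact hsub 1 e e₃ he'.1 he₃'.1 he'.2 he₃'.2
            · rw [Set.not_nonempty_iff_eq_empty] at hA
              have he' : e ∈ P0 := by
                rcases he with h | h
                · exact h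
                · rw [hA] at h; exact absurd h (Set.notMem_empty e)
              have he₃' : e₃ ∈ P0 := by
                rcases he₃ with h | h
                · exact h
                · rw [hA] at h; exact absurd h (Set.notMem_empty e₃)
              exact hsub 0 e e₃ he'.1 he₃'.1 he'.2 he₃'.2
        calc β ≤ matchingNumber (T.deleteEdges {e₃}) := hβ_le _ he₃T
          _ ≤ matchingNumber (T.deleteEdges (P0 ∪ P1)) :=
              matchingNumber_mono (SimpleGraph.deleteEdges_anti hss)
    omega
  -- color count
  have hcount : ∃ S : ℕ, 2*S + (β-1)*(β-2) = 2*((β-1)*(n-1)) ∧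
      S + r ≤ colorCount c := by
    set A := (Finset.range (β-1)).biUnion
      (fun u => (Finset.Ioo u n).image (fun v => u*n + (v+2))) with hA
    have hAcard : A.card = ∑ u ∈ Finset.range (β-1), (n - u - 1) := by
      rw [hA, Finset.card_biUnion]
      · refine Finset.sum_congr rfl fun u hu => ?_
        rw [Finset.card_image_of_injOn fun a _ b _ h => by
          have := Nat.add_left_cancel h; omega]
        rw [Nat.card_Ioo]
      · intro u hu u' hu' huu'
        rw [Function.onFun, Finset.disjoint_left]
        intro x hx hx'
        simp only [Finset.mem_image, Finset.mem_Ioo] at hx hx'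
        obtain ⟨v, ⟨huv, hvn⟩, rfl⟩ := hx
        obtain ⟨v', ⟨hu'v', hv'n⟩, h⟩ := hx'
        rw [← add_assoc, ← add_assoc] at h
        have h3 := Nat.add_right_cancel h
        exact huu' (enc_inj hv'n hvn h3).1.symm
    set S := ∑ u ∈ Finset.range (β-1), (n - u - 1) with hSdef
    have h2id : S + (∑ u ∈ Finset.range (β-1), u) = (β-1)*(n-1) := by
      rw [hSdef, ← Finset.sum_add_distrib]
      have hcon : ∀ u ∈ Finset.range (β-1), (n-u-1) + u = (n-1) := fun u hu => by
        have := Finset.mem_range.1 hu; omega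
      rw [Finset.sum_congr rfl hcon, Finset.sum_const, Finset.card_range, smul_eq_mul]
    have h3id : (∑ u ∈ Finset.range (β-1), u) * 2 = (β-1)*(β-2) := by
      have h := Finset.sum_range_id_mul_two (β-1)
      rwa [show β-1-1 = β-2 from by omega] at h
    refine ⟨S, by omega, ?_⟩
    set extra : Finset ℕ := if r = 2 then {0,1} else {0} with hextra
    have hextracard : extra.card = r := by
      rcases hr12 with h | h <;> subst h <;> rw [hextra] <;> norm_num
    have hdisj : Disjoint A extra := by
      rw [Finset.disjoint_left]
      intro x hx hx'
      simp only [hA, Finset.mem_biUnion, Finset.mem_image, Finset.mem_Ioo,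
        Finset.mem_range] at hx
      obtain ⟨u, hu, v, ⟨huv, hvn⟩, rfl⟩ := hx
      rw [hextra] at hx'
      split at hx' <;> simp only [Finset.mem_insert, Finset.mem_singleton] at hx' <;> omega
    have hFsub : ↑(A ∪ extra) ⊆ c '' (⊤ : SimpleGraph (Fin n)).edgeSet := by
      intro x hx
      rw [Finset.coe_union, Set.mem_union] at hx
      rcases hx with hx | hx
      · rw [Finset.mem_coe] at hx
        simp only [hA, Finset.mem_biUnion, Finset.mem_image, Finset.mem_Ioo,
          Finset.mem_range] at hx
        obtain ⟨u, hu, v, ⟨huv, hvn⟩, rfl⟩ := hx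
        refine ⟨s((⟨u, by omega⟩ : Fin n), (⟨v, hvn⟩ : Fin n)), ?_, ?_⟩
        · rw [SimpleGraph.mem_edgeSet, SimpleGraph.top_adj]
          intro hh
          have := congrArg Fin.val hh
          simp only at this
          omega
        · rw [hcmk]
          show cf u v = u*n + (v+2)
          simp only [hcf]
          rw [min_eq_left (le_of_lt huv), max_eq_right (le_of_lt huv), if_pos hu]
      · rw [Finset.mem_coe, hextra] at hx
        have hx01 : x = 0 ∨ (x = 1 ∧ r = 2) := by
          split at hx <;> simp only [Finset.mem_insert, Finset.mem_singleton] at hx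
          · rcases hx with h | h
            · exact Or.inl h
            · rename_i hr'; exact Or.inr ⟨h, hr'⟩
          · exact Or.inl hx
        rcases hx01 with rfl | ⟨rfl, hr'⟩
        · refine ⟨s((⟨β-1, by omega⟩ : Fin n), (⟨β+1, by omega⟩ : Fin n)), ?_, ?_⟩
          · rw [SimpleGraph.mem_edgeSet, SimpleGraph.top_adj]
            intro hh
            have := congrArg Fin.val hh
            simp only at this
            omega
          · rw [hcmk]
            show cf (β-1) (β+1) = 0
            simp only [hcf]
            rw [min_eq_left (by omega), max_eq_right (by omega),
              if_neg (by omega), if_neg (by omega)]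
        · refine ⟨s((⟨β-1, by omega⟩ : Fin n), (⟨β, by omega⟩ : Fin n)), ?_, ?_⟩
          · rw [SimpleGraph.mem_edgeSet, SimpleGraph.top_adj]
            intro hh
            have := congrArg Fin.val hh
            simp only at this
            omega
          · rw [hcmk]
            show cf (β-1) β = 1
            simp only [hcf]
            rw [min_eq_left (by omega), max_eq_right (by omega),
              if_neg (by omega), if_pos ⟨hr', rfl, rfl⟩]
    have hcc : (A ∪ extra).card ≤ colorCount c := by
      rw [← Set.ncard_coe_finset]
      exact Set.ncard_le_ncard hFsub (Set.Finite.image _ (Set.toFinite _))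
    rw [Finset.card_union_of_disjoint hdisj, hAcard, hextracard] at hcc
    exact hcc
  obtain ⟨S, hSid, hSle⟩ := hcount
  -- antiRamsey ≥ colorCount c
  have hbdd : BddAbove {m | ∃ c : Sym2 (Fin n) → ℕ, ¬ HasRainbowCopy c T ∧ colorCount c = m} := by
    refine ⟨Fintype.card (Sym2 (Fin n)), ?_⟩
    rintro m ⟨c', -, rfl⟩
    calc colorCount c' ≤ ((⊤ : SimpleGraph (Fin n)).edgeSet).ncard :=
          Set.ncard_image_le (Set.toFinite _)
      _ ≤ (Set.univ : Set (Sym2 (Fin n))).ncard :=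
          Set.ncard_le_ncard (Set.subset_univ _) Set.finite_univ
      _ = Fintype.card (Sym2 (Fin n)) := by rw [Set.ncard_univ, Nat.card_eq_fintype_card]
  have hAR : colorCount c ≤ antiRamsey n T := le_csSup hbdd ⟨c, hnorb, rfl⟩
  -- final arithmetic
  have hch : 2 * Nat.choose β 2 = β * (β - 1) := by
    rw [Nat.choose_two_right, Nat.mul_div_cancel' (Nat.even_mul_pred_self β).two_dvd]
  have hchZ : 2 * (Nat.choose β 2 : ℤ) = (β : ℤ) * ((β : ℤ) - 1) := by
    have := congrArg (Nat.cast : ℕ → ℤ) hch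
    push_cast at this
    rw [this]
    have h1 : ((β - 1 : ℕ) : ℤ) = (β : ℤ) - 1 := by omega
    rw [h1]
  have hSZ : 2*(S:ℤ) + ((β:ℤ)-1)*((β:ℤ)-2) = 2*(((β:ℤ)-1)*((n:ℤ)-1)) := by
    have := congrArg (Nat.cast : ℕ → ℤ) hSid
    push_cast at this
    have h1 : ((β - 1 : ℕ) : ℤ) = (β : ℤ) - 1 := by omega
    have h2 : ((β - 2 : ℕ) : ℤ) = (β : ℤ) - 2 := by omega
    have h3 : ((n - 1 : ℕ) : ℤ) = (n : ℤ) - 1 := by omega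
    rw [h1, h2, h3] at this
    exact this
  have hZ : ((β : ℤ) - 1) * n - (Nat.choose β 2 : ℤ) ≤ (S : ℤ) := by
    have h3 : 2*(((β:ℤ)-1)*(n:ℤ) - (Nat.choose β 2:ℤ)) = 2*(S:ℤ) := by
      linear_combination -hSZ - hchZ
    linarith
  have hfin : (S:ℤ) + r ≤ (antiRamsey n T : ℤ) := by
    exact_mod_cast le_trans hSle hAR
  linarith [hZ, hfin]
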